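/- Let n ≥ 2 and let y_1, …, y_n be nonzero real numbers with |y_i| < |y_{i+1}| for i = 1, …, n−1. Then ∏_{1 ≤ i < j ≤ n} (1 − y_i/y_j) ≤ 2^{⌊n/2⌋}. -/

import Mathlib

open Finset

namespace PohstAux

/-- Nonnegative finite combinations of exponentials `u ↦ Σ cᵢ * exp (αᵢ * u)`. -/
def PES (f : ℝ → ℝ) : Prop :=
  ∃ l : List (ℝ × ℝ), (∀ p ∈ l, 0 ≤ p.1) ∧
    ∀ u : ℝ, f u = (l.map fun p => p.1 * Real.exp (p.2 * u)).sum

lemma PES.const {c : ℝ} (hc : 0 ≤ c) : PES (fun _ => c) := by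
  refine ⟨[(c, 0)], by simpa using hc, fun u => by simp⟩

lemma PES.mixed {X δ : ℝ} (hX : 0 ≤ X) :
    PES (fun u => 1 + X * Real.exp (δ * u)) := by
  refine ⟨[(1, 0), (X, δ)], ?_, fun u => by simp⟩
  intro p hp
  simp only [List.mem_cons, List.mem_singleton] at hp
  rcases hp with rfl | rfl | h
  · norm_num
  · exact hX
  · simp at h

lemma PES.mul {f g : ℝ → ℝ} (hf : PES f) (hg : PES g) :
    PES (fun u => f u * g u) := by
  obtain ⟨l, hl, hfl⟩ := hf
  obtain ⟨m, hm, hgm⟩ := hg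
  refine ⟨l.flatMap fun p => m.map fun q => (p.1 * q.1, p.2 + q.2), ?_, ?_⟩
  · intro p hp
    simp only [List.mem_flatMap, List.mem_map] at hp
    obtain ⟨a, ha, b, hb, rfl⟩ := hp
    exact mul_nonneg (hl a ha) (hm b hb)
  · intro u
    show f u * g u = _
    rw [hfl, hgm]
    clear hfl hgm hl
    induction l with
    | nil => simp
    | cons a l ih =>
      simp only [List.flatMap_cons, List.map_append, List.sum_append, List.map_cons,
        List.sum_cons, add_mul, ih]
      congr 1
      have hcomp : ((fun p : ℝ × ℝ => p.1 * Real.exp (p.2 * u)) ∘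
          fun q : ℝ × ℝ => (a.1 * q.1, a.2 + q.2)) =
          fun q : ℝ × ℝ => (a.1 * Real.exp (a.2 * u)) * (q.1 * Real.exp (q.2 * u)) := by
        funext q
        simp only [Function.comp]
        rw [add_mul, Real.exp_add]
        ring
      rw [List.map_map, hcomp, List.sum_map_mul_left]

lemma PES.one : PES (fun _ => (1 : ℝ)) := PES.const zero_le_one

lemma PES.finsetProd {α : Type*} (s : Finset α) (f : α → ℝ → ℝ)
    (h : ∀ a ∈ s, PES (f a)) : PES (fun u => ∏ a ∈ s, f a u) := by
  classical
  induction s using Finset.cons_induction with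
  | empty => simpa using PES.one
  | cons a s ha ih =>
    simp only [Finset.prod_cons]
    exact (h a (Finset.mem_cons_self a s)).mul
      (ih fun b hb => h b (Finset.mem_cons_of_mem hb))

lemma convexOn_exp_term {c d : ℝ} (hc : 0 ≤ c) :
    ConvexOn ℝ Set.univ (fun u : ℝ => c * Real.exp (d * u)) := by
  refine ⟨convex_univ, ?_⟩
  intro x _ y _ θ η hθ hη hsum
  have h := convexOn_exp.2 (Set.mem_univ (d * x)) (Set.mem_univ (d * y)) hθ hη hsum
  simp only [smul_eq_mul] at h ⊢
  have e : d * (θ * x + η * y) = θ * (d * x) + η * (d * y) := by ring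
  rw [e]
  calc c * Real.exp (θ * (d * x) + η * (d * y))
      ≤ c * (θ * Real.exp (d * x) + η * Real.exp (d * y)) :=
        mul_le_mul_of_nonneg_left h hc
    _ = θ * (c * Real.exp (d * x)) + η * (c * Real.exp (d * y)) := by ring

lemma PES.convexOn {f : ℝ → ℝ} (hf : PES f) : ConvexOn ℝ Set.univ f := by
  obtain ⟨l, hl, hfl⟩ := hf
  have : f = fun u => (l.map fun p => p.1 * Real.exp (p.2 * u)).sum := funext hfl
  rw [this]; clear this hfl
  induction l with
  | nil => simpa using convexOn_const (0 : ℝ) convex_univ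
  | cons a l ih =>
    simp only [List.map_cons, List.sum_cons]
    exact (convexOn_exp_term (hl a List.mem_cons_self)).add
      (ih fun p hp => hl p (List.mem_cons_of_mem a hp))

lemma ConvexOn.zero_le_max {F : ℝ → ℝ} (hF : ConvexOn ℝ Set.univ F) {a b : ℝ}
    (ha : a ≤ 0) (hb : 0 ≤ b) : F 0 ≤ max (F a) (F b) := by
  have hab : a ≤ b := le_trans ha hb
  have h0 : (0 : ℝ) ∈ segment ℝ a b := by
    rw [segment_eq_Icc hab]; exact ⟨ha, hb⟩
  obtain ⟨θ, η, hθ, hη, hsum, heq⟩ := h0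
  calc F 0 = F (θ • a + η • b) := by rw [heq]
    _ ≤ θ • F a + η • F b :=
        hF.2 (Set.mem_univ a) (Set.mem_univ b) hθ hη hsum
    _ ≤ θ • max (F a) (F b) + η • max (F a) (F b) := by
        gcongr
        · exact le_max_left _ _
        · exact le_max_right _ _
    _ = max (F a) (F b) := by
        simp only [smul_eq_mul, ← add_mul, hsum, one_mul]

/-! ### The combinatorial product -/

def pr (S : Finset ℕ) : Finset (ℕ × ℕ) := (S ×ˢ S).filter fun q => q.1 < q.2

noncomputable def PP (y : ℕ → ℝ) (S : Finset ℕ) : ℝ := ∏ q ∈ pr S, (1 - y q.1 / y q.2)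

lemma mem_pr {S : Finset ℕ} {q : ℕ × ℕ} :
    q ∈ pr S ↔ q.1 ∈ S ∧ q.2 ∈ S ∧ q.1 < q.2 := by
  simp [pr, Finset.mem_filter, Finset.mem_product, and_assoc]

/-- Hypotheses: nonzero and weakly increasing absolute values. -/
def OK (y : ℕ → ℝ) (S : Finset ℕ) : Prop :=
  (∀ i ∈ S, y i ≠ 0) ∧ (∀ i ∈ S, ∀ j ∈ S, i ≤ j → |y i| ≤ |y j|)

lemma OK.mono {y : ℕ → ℝ} {S T : Finset ℕ} (h : OK y S) (hTS : T ⊆ S) : OK y T :=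
  ⟨fun i hi => h.1 i (hTS hi), fun i hi j hj => h.2 i (hTS hi) j (hTS hj)⟩

lemma ratio_le_one {y : ℕ → ℝ} {S : Finset ℕ} (h : OK y S) {i j : ℕ}
    (hi : i ∈ S) (hj : j ∈ S) (hij : i ≤ j) : y i / y j ≤ 1 := by
  have hja : 0 < |y j| := abs_pos.mpr (h.1 j hj)
  calc y i / y j ≤ |y i / y j| := le_abs_self _
    _ = |y i| / |y j| := abs_div _ _
    _ ≤ 1 := (div_le_one hja).mpr (h.2 i hi j hj hij)

lemma factor_nonneg {y : ℕ → ℝ} {S : Finset ℕ} (h : OK y S) {i j : ℕ}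
    (hi : i ∈ S) (hj : j ∈ S) (hij : i ≤ j) : 0 ≤ 1 - y i / y j := by
  linarith [ratio_le_one h hi hj hij]

lemma PP_nonneg {y : ℕ → ℝ} {S : Finset ℕ} (h : OK y S) : 0 ≤ PP y S := by
  apply Finset.prod_nonneg
  intro q hq
  rw [mem_pr] at hq
  exact factor_nonneg h hq.1 hq.2.1 (le_of_lt hq.2.2)

lemma PP_insert (y : ℕ → ℝ) {a : ℕ} {S : Finset ℕ} (ha : a ∉ S) :
    PP y (insert a S) = PP y S *
      ((∏ i ∈ S.filter (· < a), (1 - y i / y a)) *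
       ∏ j ∈ S.filter (a < ·), (1 - y a / y j)) := by
  classical
  have h1 : pr (insert a S) = (pr S ∪ (S.filter (· < a)).image fun i => (i, a)) ∪
      (S.filter (a < ·)).image fun j => (a, j) := by
    ext ⟨i, j⟩
    simp only [mem_pr, Finset.mem_union, Finset.mem_image, Finset.mem_filter,
      Finset.mem_insert, Prod.mk.injEq]
    constructor
    · rintro ⟨hi | hi, hj | hj, hij⟩
      · omega
      · subst hi; exact Or.inr ⟨j, ⟨hj, hij⟩, rfl, rfl⟩
      · subst hj; exact Or.inl (Or.inr ⟨i, ⟨hi, hij⟩, rfl, rfl⟩)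
      · exact Or.inl (Or.inl ⟨hi, hj, hij⟩)
    · rintro ((⟨hi, hj, hij⟩ | ⟨x, ⟨hx, hxa⟩, rfl, rfl⟩) | ⟨x, ⟨hx, hax⟩, rfl, rfl⟩)
      · exact ⟨Or.inr hi, Or.inr hj, hij⟩
      · exact ⟨Or.inr hx, Or.inl rfl, hxa⟩
      · exact ⟨Or.inl rfl, Or.inr hx, hax⟩
  have hd1 : Disjoint (pr S) ((S.filter (· < a)).image fun i => (i, a)) := by
    rw [Finset.disjoint_left]
    rintro ⟨i, j⟩ hq hq'
    rw [mem_pr] at hq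
    simp only [Finset.mem_image, Finset.mem_filter, Prod.mk.injEq] at hq'
    obtain ⟨x, _, rfl, rfl⟩ := hq'
    exact ha hq.2.1
  have hd2 : Disjoint (pr S ∪ (S.filter (· < a)).image fun i => (i, a))
      ((S.filter (a < ·)).image fun j => (a, j)) := by
    rw [Finset.disjoint_left]
    rintro ⟨i, j⟩ hq hq'
    simp only [Finset.mem_image, Finset.mem_filter, Prod.mk.injEq] at hq'
    obtain ⟨x, ⟨hx, hax⟩, rfl, rfl⟩ := hq'
    rcases Finset.mem_union.mp hq with hq | hq
    · rw [mem_pr] at hq; exact ha hq.1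
    · simp only [Finset.mem_image, Finset.mem_filter, Prod.mk.injEq] at hq
      obtain ⟨z, ⟨hz, hza⟩, rfl, h2⟩ := hq
      omega
  unfold PP
  rw [h1, Finset.prod_union hd2, Finset.prod_union hd1,
    Finset.prod_image (fun x _ z _ h => congrArg Prod.fst h),
    Finset.prod_image (fun x _ z _ h => congrArg Prod.snd h)]
  ring

/-- The merging step: if `y k' = -y k` then pulling out `k, k'` costs a factor `2`. -/
lemma merge {y : ℕ → ℝ} {S : Finset ℕ} {k k' : ℕ} (hOK : OK y S)
    (hk : k ∈ S) (hk' : k' ∈ S) (hlt : k < k') (hopp : y k' = -y k) :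
    PP y S ≤ 2 * PP y ((S.erase k).erase k') := by
  classical
  set T := (S.erase k).erase k' with hT
  have hkk' : k ≠ k' := ne_of_lt hlt
  have hk'e : k' ∈ S.erase k := Finset.mem_erase.mpr ⟨Ne.symm hkk', hk'⟩
  have hk'T : k' ∉ T := Finset.notMem_erase _ _
  have hkT : k ∉ insert k' T := by
    simp only [Finset.mem_insert]
    rintro (rfl | hkT)
    · exact hkk' rfl
    · exact (Finset.notMem_erase k _) (Finset.mem_of_mem_erase hkT)
  have hS : S = insert k (insert k' T) := by
    rw [hT, Finset.insert_erase hk'e, Finset.insert_erase hk]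
  have hTS : T ⊆ S := subset_trans (Finset.erase_subset _ _) (Finset.erase_subset _ _)
  have hyk : y k ≠ 0 := hOK.1 k hk
  have hfkk' : 1 - y k / y k' = 2 := by
    rw [hopp, div_neg, div_self hyk]; norm_num
  -- expand
  have hfilt1 : (insert k' T).filter (· < k) = T.filter (· < k) := by
    rw [Finset.filter_insert, if_neg (by omega)]
  have hfilt2 : (insert k' T).filter (k < ·) = insert k' (T.filter (k < ·)) := by
    rw [Finset.filter_insert, if_pos hlt]
  have hk'nf : k' ∉ T.filter (k < ·) := fun h => hk'T (Finset.mem_of_mem_filter _ h)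
  have expand : PP y S = 2 * (PP y T *
      (((∏ i ∈ T.filter (· < k'), (1 - y i / y k')) *
        ∏ j ∈ T.filter (k' < ·), (1 - y k' / y j)) *
       ((∏ i ∈ T.filter (· < k), (1 - y i / y k)) *
        ∏ j ∈ T.filter (k < ·), (1 - y k / y j)))) := by
    rw [hS, PP_insert y hkT, PP_insert y hk'T, hfilt1, hfilt2,
      Finset.prod_insert hk'nf, hfkk']
    ring
  rw [expand]
  have hG : ((∏ i ∈ T.filter (· < k'), (1 - y i / y k')) *
        ∏ j ∈ T.filter (k' < ·), (1 - y k' / y j)) *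
       ((∏ i ∈ T.filter (· < k), (1 - y i / y k)) *
        ∏ j ∈ T.filter (k < ·), (1 - y k / y j)) =
      ∏ i ∈ T, ((if i < k' then 1 - y i / y k' else 1) *
        (if k' < i then 1 - y k' / y i else 1) *
        ((if i < k then 1 - y i / y k else 1) *
         (if k < i then 1 - y k / y i else 1))) := by
    simp only [Finset.prod_filter, ← Finset.prod_mul_distrib]
  rw [hG]
  have habs : |y k'| = |y k| := by rw [hopp, abs_neg]
  have hbound : ∀ i ∈ T, 0 ≤ (if i < k' then 1 - y i / y k' else 1) *
        (if k' < i then 1 - y k' / y i else 1) *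
        ((if i < k then 1 - y i / y k else 1) *
         (if k < i then 1 - y k / y i else 1)) ∧
      (if i < k' then 1 - y i / y k' else 1) *
        (if k' < i then 1 - y k' / y i else 1) *
        ((if i < k then 1 - y i / y k else 1) *
         (if k < i then 1 - y k / y i else 1)) ≤ 1 := by
    intro i hiT
    have hiS : i ∈ S := hTS hiT
    have hik : i ≠ k := by
      intro h; subst h
      exact (Finset.notMem_erase i _) (Finset.mem_of_mem_erase hiT)
    have hik' : i ≠ k' := by intro h; subst h; exact hk'T hiT
    have hyi : y i ≠ 0 := hOK.1 i hiS
    have hyk' : y k' ≠ 0 := hOK.1 k' hk'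
    rcases lt_trichotomy i k with hik1 | hik1 | hik1
    · -- i < k < k'
      have hik'1 : i < k' := lt_trans hik1 hlt
      simp only [if_pos hik1, if_pos hik'1, if_neg (by omega : ¬ k' < i),
        if_neg (by omega : ¬ k < i), mul_one, one_mul]
      have h1 : y i / y k' = -(y i / y k) := by rw [hopp, div_neg]
      rw [h1]
      have h2 : |y i / y k| ≤ 1 := by
        rw [abs_div]
        exact (div_le_one (abs_pos.mpr hyk)).mpr (hOK.2 i hiS k hk (le_of_lt hik1))
      have h3 : (1 - -(y i / y k)) * (1 - y i / y k) = 1 - (y i / y k) ^ 2 := by ring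
      rw [h3]
      constructor
      · nlinarith [abs_le.mp h2]
      · nlinarith [sq_nonneg (y i / y k)]
    · exact absurd hik1 hik
    · rcases lt_trichotomy i k' with hik'1 | hik'1 | hik'1
      · -- k < i < k'
        simp only [if_pos hik'1, if_neg (by omega : ¬ k' < i),
          if_neg (by omega : ¬ i < k), if_pos hik1, mul_one, one_mul]
        have heq : |y i| = |y k| := le_antisymm
          (habs ▸ hOK.2 i hiS k' hk' (le_of_lt hik'1))
          (hOK.2 k hk i hiS (le_of_lt hik1))
        rcases abs_eq_abs.mp heq with he | he
        · have hz : 1 - y k / y i = 0 := by rw [he, div_self hyk, sub_self]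
          rw [hz, mul_zero]
          norm_num
        · have hz : 1 - y i / y k' = 0 := by
            rw [he, hopp, div_self (neg_ne_zero.mpr hyk), sub_self]
          rw [hz, zero_mul]
          norm_num
      · exact absurd hik'1 hik'
      · -- k < k' < i
        simp only [if_neg (by omega : ¬ i < k'), if_pos hik'1,
          if_neg (by omega : ¬ i < k), if_pos hik1, one_mul]
        have h1 : y k' / y i = -(y k / y i) := by rw [hopp, neg_div]
        rw [h1]
        have h2 : |y k / y i| ≤ 1 := by
          rw [abs_div]
          exact (div_le_one (abs_pos.mpr hyi)).mpr (hOK.2 k hk i hiS (le_of_lt hik1))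
        have h3 : (1 - -(y k / y i)) * (1 - y k / y i) = 1 - (y k / y i) ^ 2 := by ring
        rw [h3]
        constructor
        · nlinarith [abs_le.mp h2]
        · nlinarith [sq_nonneg (y k / y i)]
  have hG1 : (∏ i ∈ T, ((if i < k' then 1 - y i / y k' else 1) *
        (if k' < i then 1 - y k' / y i else 1) *
        ((if i < k then 1 - y i / y k else 1) *
         (if k < i then 1 - y k / y i else 1)))) ≤ 1 :=
    Finset.prod_le_one (fun i hi => (hbound i hi).1) (fun i hi => (hbound i hi).2)
  have hPPT : 0 ≤ PP y T := PP_nonneg (hOK.mono hTS)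
  have key := mul_le_of_le_one_right hPPT hG1
  linarith


/-! ### Scaling the positive entries -/

noncomputable def ysc (y : ℕ → ℝ) (lam : ℝ) : ℕ → ℝ :=
  fun i => if 0 < y i then lam * y i else y i

lemma ysc_one (y : ℕ → ℝ) : ysc y 1 = y := by
  funext i; unfold ysc; split <;> simp

lemma ysc_pos {y : ℕ → ℝ} {lam : ℝ} {i : ℕ} (h : 0 < y i) : ysc y lam i = lam * y i :=
  if_pos h

lemma ysc_npos {y : ℕ → ℝ} {lam : ℝ} {i : ℕ} (h : ¬ 0 < y i) : ysc y lam i = y i :=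
  if_neg h

lemma scaledOK {y : ℕ → ℝ} {S : Finset ℕ} (hOK : OK y S) {lam : ℝ} (hl : 0 < lam)
    (hU : ∀ q ∈ (pr S).filter (fun q => y q.1 < 0 ∧ 0 < y q.2), -y q.1 ≤ lam * y q.2)
    (hD : ∀ q ∈ (pr S).filter (fun q => 0 < y q.1 ∧ y q.2 < 0), lam * y q.1 ≤ -y q.2) :
    OK (ysc y lam) S := by
  constructor
  · intro i hi
    unfold ysc; split
    · exact mul_ne_zero (ne_of_gt hl) (hOK.1 i hi)
    · exact hOK.1 i hi
  · intro i hi j hj hij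
    have hyi := hOK.1 i hi
    have hyj := hOK.1 j hj
    have habs := hOK.2 i hi j hj hij
    by_cases hi0 : 0 < y i <;> by_cases hj0 : 0 < y j
    · rw [ysc_pos hi0, ysc_pos hj0, abs_mul, abs_mul]
      exact mul_le_mul_of_nonneg_left habs (abs_nonneg _)
    · have hj0' : y j < 0 := lt_of_le_of_ne (not_lt.mp hj0) hyj
      have hij' : i < j := by
        rcases lt_or_eq_of_le hij with h | h
        · exact h
        · subst h; linarith
      have hq : (⟨i, j⟩ : ℕ × ℕ) ∈ (pr S).filter (fun q => 0 < y q.1 ∧ y q.2 < 0) := by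
        rw [Finset.mem_filter, mem_pr]; exact ⟨⟨hi, hj, hij'⟩, hi0, hj0'⟩
      have hDq := hD _ hq
      rw [ysc_pos hi0, ysc_npos hj0, abs_of_pos (mul_pos hl hi0), abs_of_neg hj0']
      simpa using hDq
    · have hi0' : y i < 0 := lt_of_le_of_ne (not_lt.mp hi0) hyi
      have hij' : i < j := by
        rcases lt_or_eq_of_le hij with h | h
        · exact h
        · subst h; linarith
      have hq : (⟨i, j⟩ : ℕ × ℕ) ∈ (pr S).filter (fun q => y q.1 < 0 ∧ 0 < y q.2) := by
        rw [Finset.mem_filter, mem_pr]; exact ⟨⟨hi, hj, hij'⟩, hi0', hj0⟩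
      have hUq := hU _ hq
      rw [ysc_npos hi0, ysc_pos hj0, abs_of_neg hi0', abs_of_pos (mul_pos hl hj0)]
      simpa using hUq
    · rw [ysc_npos hi0, ysc_npos hj0]; exact habs

/-! ### The merge step packaged with the induction hypothesis -/

lemma mergeBound {N : ℕ}
    (ih : ∀ (S : Finset ℕ) (y : ℕ → ℝ), S.card ≤ N → OK y S → PP y S ≤ 2 ^ (S.card / 2))
    {S : Finset ℕ} {y : ℕ → ℝ} (hc : S.card ≤ N + 1) (hOK : OK y S)
    (hopp : ∃ k ∈ S, ∃ k' ∈ S, k < k' ∧ y k' = -y k) :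
    PP y S ≤ 2 ^ (S.card / 2) := by
  obtain ⟨k, hk, k', hk', hlt, heq⟩ := hopp
  set T := (S.erase k).erase k' with hT
  have hk'e : k' ∈ S.erase k := Finset.mem_erase.mpr ⟨(ne_of_lt hlt).symm, hk'⟩
  have hcard : T.card = S.card - 2 := by
    rw [hT, Finset.card_erase_of_mem hk'e, Finset.card_erase_of_mem hk]
    omega
  have h2 : 2 ≤ S.card := by
    have := Finset.one_lt_card.mpr ⟨k, hk, k', hk', ne_of_lt hlt⟩
    omega
  have hTS : T ⊆ S :=
    subset_trans (Finset.erase_subset _ _) (Finset.erase_subset _ _)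
  have hb := ih T y (by omega) (hOK.mono hTS)
  have hm := merge hOK hk hk' hlt heq
  calc PP y S ≤ 2 * PP y T := hm
    _ ≤ 2 * 2 ^ (T.card / 2) := by linarith
    _ = 2 ^ (S.card / 2) := by
        rw [hcard, ← pow_succ']
        congr 1
        omega

/-! ### The main induction -/

lemma main : ∀ (N : ℕ) (S : Finset ℕ) (y : ℕ → ℝ), S.card ≤ N → OK y S →
    PP y S ≤ 2 ^ (S.card / 2) := by
  intro N
  induction N with
  | zero =>
    intro S y hc hOK
    have hS : S = ∅ := Finset.card_eq_zero.mp (Nat.le_zero.mp hc)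
    subst hS
    simp [PP, pr]
  | succ N ih =>
    intro S y hc hOK
    by_cases hopp : ∃ k ∈ S, ∃ k' ∈ S, k < k' ∧ y k' = -y k
    · exact mergeBound ih hc hOK hopp
    by_cases hpos : ∃ i ∈ S, 0 < y i
    swap
    · -- all entries negative
      push_neg at hpos
      have hle : ∀ q ∈ pr S, 1 - y q.1 / y q.2 ≤ 1 := by
        intro q hq
        rw [mem_pr] at hq
        have h1 : y q.1 < 0 := lt_of_le_of_ne (hpos q.1 hq.1) (hOK.1 q.1 hq.1)
        have h2 : y q.2 < 0 := lt_of_le_of_ne (hpos q.2 hq.2.1) (hOK.1 q.2 hq.2.1)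
        have : 0 < y q.1 / y q.2 := div_pos_of_neg_of_neg h1 h2
        linarith
      have h1 : PP y S ≤ 1 := Finset.prod_le_one
        (fun q hq => factor_nonneg hOK (mem_pr.mp hq).1 (mem_pr.mp hq).2.1
          (le_of_lt (mem_pr.mp hq).2.2)) hle
      calc PP y S ≤ 1 := h1
        _ ≤ 2 ^ (S.card / 2) := one_le_pow₀ (by norm_num)
    by_cases hneg : ∃ j ∈ S, y j < 0
    swap
    · -- all entries positive
      push_neg at hneg
      have hle : ∀ q ∈ pr S, 1 - y q.1 / y q.2 ≤ 1 := by
        intro q hq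
        rw [mem_pr] at hq
        have h1 : 0 < y q.1 := lt_of_le_of_ne (hneg q.1 hq.1) (Ne.symm (hOK.1 q.1 hq.1))
        have h2 : 0 < y q.2 := lt_of_le_of_ne (hneg q.2 hq.2.1) (Ne.symm (hOK.1 q.2 hq.2.1))
        have : 0 < y q.1 / y q.2 := div_pos h1 h2
        linarith
      have h1 : PP y S ≤ 1 := Finset.prod_le_one
        (fun q hq => factor_nonneg hOK (mem_pr.mp hq).1 (mem_pr.mp hq).2.1
          (le_of_lt (mem_pr.mp hq).2.2)) hle
      calc PP y S ≤ 1 := h1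
        _ ≤ 2 ^ (S.card / 2) := one_le_pow₀ (by norm_num)
    -- mixed signs, no opposite pair: the analytic case
    obtain ⟨ip, hip, hyp⟩ := hpos
    obtain ⟨jn, hjn, hyn⟩ := hneg
    -- abbreviations
    have habs2 : ∀ {i j : ℕ}, i ∈ S → j ∈ S → i < j → |y i| ≤ |y j| :=
      fun {i j} hi hj hij => hOK.2 i hi j hj (le_of_lt hij)
    -- the two families of mixed pairs
    by_cases hD : ((pr S).filter (fun q => 0 < y q.1 ∧ y q.2 < 0)).Nonempty
    · -- there is a pair (+,-) : we can scale up to lamP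
      obtain ⟨lamP, hlamP1, hOKP, hPP⟩ :
          ∃ lam : ℝ, 1 ≤ lam ∧ OK (ysc y lam) S ∧
            PP (ysc y lam) S ≤ 2 ^ (S.card / 2) := by
        set Dp := (pr S).filter (fun q => 0 < y q.1 ∧ y q.2 < 0) with hDp
        set lam := Dp.inf' hD (fun q => -y q.2 / y q.1) with hlam
        have hmem : ∀ q ∈ Dp, q.1 ∈ S ∧ q.2 ∈ S ∧ q.1 < q.2 ∧ 0 < y q.1 ∧ y q.2 < 0 := by
          intro q hq
          rw [hDp, Finset.mem_filter, mem_pr] at hq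
          exact ⟨hq.1.1, hq.1.2.1, hq.1.2.2, hq.2⟩
        have hone : 1 ≤ lam := by
          rw [hlam]
          apply Finset.le_inf'
          intro q hq
          obtain ⟨h1, h2, h3, h4, h5⟩ := hmem q hq
          rw [le_div_iff₀ h4, one_mul]
          have := habs2 h1 h2 h3
          rw [abs_of_pos h4, abs_of_neg h5] at this
          exact this
        have hDbd : ∀ q ∈ Dp, lam * y q.1 ≤ -y q.2 := by
          intro q hq
          obtain ⟨h1, h2, h3, h4, h5⟩ := hmem q hq
          have : lam ≤ -y q.2 / y q.1 := by
            rw [hlam]; exact Finset.inf'_le (fun q => -y q.2 / y q.1) hq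
          calc lam * y q.1 ≤ (-y q.2 / y q.1) * y q.1 :=
                mul_le_mul_of_nonneg_right this (le_of_lt h4)
            _ = -y q.2 := div_mul_cancel₀ _ (ne_of_gt h4)
        have hUbd : ∀ q ∈ (pr S).filter (fun q => y q.1 < 0 ∧ 0 < y q.2),
            -y q.1 ≤ lam * y q.2 := by
          intro q hq
          rw [Finset.mem_filter, mem_pr] at hq
          have := habs2 hq.1.1 hq.1.2.1 hq.1.2.2
          rw [abs_of_neg hq.2.1, abs_of_pos hq.2.2] at this
          calc -y q.1 ≤ y q.2 := this
            _ ≤ lam * y q.2 := le_mul_of_one_le_left (le_of_lt hq.2.2) hone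
        have hl0 : (0:ℝ) < lam := lt_of_lt_of_le one_pos hone
        have hOK' := scaledOK hOK hl0 hUbd hDbd
        refine ⟨lam, hone, hOK', ?_⟩
        obtain ⟨q0, hq0, hq0e⟩ := Finset.exists_mem_eq_inf' hD (fun q => -y q.2 / y q.1)
        obtain ⟨h1, h2, h3, h4, h5⟩ := hmem q0 hq0
        apply mergeBound ih hc hOK'
        refine ⟨q0.1, h1, q0.2, h2, h3, ?_⟩
        rw [ysc_pos h4, ysc_npos (not_lt.mpr (le_of_lt h5))]
        rw [hlam.trans hq0e, div_mul_cancel₀ _ (ne_of_gt h4), neg_neg]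
      -- now connect PP y S with the endpoint(s)
      by_cases hU : ((pr S).filter (fun q => y q.1 < 0 ∧ 0 < y q.2)).Nonempty
      · -- both families nonempty: convexity argument
        obtain ⟨lamM, hlamM1, hlamM0, hOKM, hPM⟩ :
            ∃ lam : ℝ, lam ≤ 1 ∧ 0 < lam ∧ OK (ysc y lam) S ∧
              PP (ysc y lam) S ≤ 2 ^ (S.card / 2) := by
          set Up := (pr S).filter (fun q => y q.1 < 0 ∧ 0 < y q.2) with hUp
          set lam := Up.sup' hU (fun q => -y q.1 / y q.2) with hlam
          have hmem : ∀ q ∈ Up, q.1 ∈ S ∧ q.2 ∈ S ∧ q.1 < q.2 ∧ y q.1 < 0 ∧ 0 < y q.2 := by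
            intro q hq
            rw [hUp, Finset.mem_filter, mem_pr] at hq
            exact ⟨hq.1.1, hq.1.2.1, hq.1.2.2, hq.2⟩
          have hone : lam ≤ 1 := by
            rw [hlam]
            apply Finset.sup'_le
            intro q hq
            obtain ⟨h1, h2, h3, h4, h5⟩ := hmem q hq
            rw [div_le_one h5]
            have := habs2 h1 h2 h3
            rw [abs_of_neg h4, abs_of_pos h5] at this
            exact this
          have hl0 : (0:ℝ) < lam := by
            obtain ⟨q, hq⟩ := hU
            obtain ⟨h1, h2, h3, h4, h5⟩ := hmem q hq
            have : 0 < -y q.1 / y q.2 := div_pos (by linarith) h5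
            calc (0:ℝ) < -y q.1 / y q.2 := this
              _ ≤ lam := by rw [hlam]; exact Finset.le_sup' (fun q => -y q.1 / y q.2) hq
          have hUbd : ∀ q ∈ Up, -y q.1 ≤ lam * y q.2 := by
            intro q hq
            obtain ⟨h1, h2, h3, h4, h5⟩ := hmem q hq
            have hle : -y q.1 / y q.2 ≤ lam := by
              rw [hlam]; exact Finset.le_sup' (fun q => -y q.1 / y q.2) hq
            calc -y q.1 = (-y q.1 / y q.2) * y q.2 :=
                  (div_mul_cancel₀ _ (ne_of_gt h5)).symm
              _ ≤ lam * y q.2 := mul_le_mul_of_nonneg_right hle (le_of_lt h5)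
          have hDbd : ∀ q ∈ (pr S).filter (fun q => 0 < y q.1 ∧ y q.2 < 0),
              lam * y q.1 ≤ -y q.2 := by
            intro q hq
            rw [Finset.mem_filter, mem_pr] at hq
            have := habs2 hq.1.1 hq.1.2.1 hq.1.2.2
            rw [abs_of_pos hq.2.1, abs_of_neg hq.2.2] at this
            calc lam * y q.1 ≤ y q.1 :=
                  mul_le_of_le_one_left (le_of_lt hq.2.1) hone
              _ ≤ -y q.2 := this
          have hOK' := scaledOK hOK hl0 hUbd hDbd
          refine ⟨lam, hone, hl0, hOK', ?_⟩
          obtain ⟨q0, hq0, hq0e⟩ := Finset.exists_mem_eq_sup' hU (fun q => -y q.1 / y q.2)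
          obtain ⟨h1, h2, h3, h4, h5⟩ := hmem q0 hq0
          apply mergeBound ih hc hOK'
          refine ⟨q0.1, h1, q0.2, h2, h3, ?_⟩
          rw [ysc_pos h5, ysc_npos (not_lt.mpr (le_of_lt h4))]
          rw [hlam.trans hq0e, div_mul_cancel₀ _ (ne_of_gt h5)]
        -- convexity in u (scaling the positive part by exp u)
        have hlamP0 : (0:ℝ) < lamP := lt_of_lt_of_le one_pos hlamP1
        have hPES : ∀ q ∈ pr S,
            PES (fun u => 1 - ysc y (Real.exp u) q.1 / ysc y (Real.exp u) q.2) := by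
          intro q hq
          have hq' := mem_pr.mp hq
          have hy1 := hOK.1 q.1 hq'.1
          have hy2 := hOK.1 q.2 hq'.2.1
          by_cases h10 : 0 < y q.1 <;> by_cases h20 : 0 < y q.2
          · have heq : (fun u => 1 - ysc y (Real.exp u) q.1 / ysc y (Real.exp u) q.2) =
                fun _ => 1 - y q.1 / y q.2 := by
              funext u
              rw [ysc_pos h10, ysc_pos h20, mul_div_mul_left _ _ (Real.exp_ne_zero u)]
            rw [heq]
            exact PES.const (factor_nonneg hOK hq'.1 hq'.2.1 (le_of_lt hq'.2.2))
          · have h2n : y q.2 < 0 := lt_of_le_of_ne (not_lt.mp h20) hy2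
            have hX : 0 ≤ -(y q.1 / y q.2) :=
              le_of_lt (neg_pos.mpr (div_neg_of_pos_of_neg h10 h2n))
            have heq : (fun u => 1 - ysc y (Real.exp u) q.1 / ysc y (Real.exp u) q.2) =
                fun u => 1 + (-(y q.1 / y q.2)) * Real.exp (1 * u) := by
              funext u
              rw [ysc_pos h10, ysc_npos h20, one_mul, mul_div_assoc]
              ring
            rw [heq]
            exact PES.mixed hX
          · have h1n : y q.1 < 0 := lt_of_le_of_ne (not_lt.mp h10) hy1
            have hX : 0 ≤ -(y q.1 / y q.2) :=
              le_of_lt (neg_pos.mpr (div_neg_of_neg_of_pos h1n h20))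
            have heq : (fun u => 1 - ysc y (Real.exp u) q.1 / ysc y (Real.exp u) q.2) =
                fun u => 1 + (-(y q.1 / y q.2)) * Real.exp ((-1) * u) := by
              funext u
              rw [ysc_npos h10, ysc_pos h20, neg_one_mul, Real.exp_neg,
                div_mul_eq_div_div_swap, div_eq_mul_inv]
              ring
            rw [heq]
            exact PES.mixed hX
          · have heq : (fun u => 1 - ysc y (Real.exp u) q.1 / ysc y (Real.exp u) q.2) =
                fun _ => 1 - y q.1 / y q.2 := by
              funext u
              rw [ysc_npos h10, ysc_npos h20]
            rw [heq]
            exact PES.const (factor_nonneg hOK hq'.1 hq'.2.1 (le_of_lt hq'.2.2))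
        have hconv : ConvexOn ℝ Set.univ
            (fun u => ∏ q ∈ pr S, (1 - ysc y (Real.exp u) q.1 / ysc y (Real.exp u) q.2)) :=
          (PES.finsetProd _ _ hPES).convexOn
        have ha : Real.log lamM ≤ 0 := Real.log_nonpos (le_of_lt hlamM0) hlamM1
        have hb : 0 ≤ Real.log lamP := Real.log_nonneg hlamP1
        have hmax := ConvexOn.zero_le_max hconv ha hb
        have hF0 : (∏ q ∈ pr S, (1 - ysc y (Real.exp 0) q.1 / ysc y (Real.exp 0) q.2)) =
            PP y S := by
          rw [Real.exp_zero, ysc_one]; rfl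
        have hFa : (∏ q ∈ pr S,
            (1 - ysc y (Real.exp (Real.log lamM)) q.1 / ysc y (Real.exp (Real.log lamM)) q.2)) =
            PP (ysc y lamM) S := by
          rw [Real.exp_log hlamM0]; rfl
        have hFb : (∏ q ∈ pr S,
            (1 - ysc y (Real.exp (Real.log lamP)) q.1 / ysc y (Real.exp (Real.log lamP)) q.2)) =
            PP (ysc y lamP) S := by
          rw [Real.exp_log hlamP0]; rfl
        rw [hF0, hFa, hFb] at hmax
        calc PP y S ≤ max (PP (ysc y lamM) S) (PP (ysc y lamP) S) := hmax
          _ ≤ 2 ^ (S.card / 2) := max_le hPM hPP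
      · -- U empty: scaling up is monotone
        have hmono : PP y S ≤ PP (ysc y lamP) S := by
          unfold PP
          apply Finset.prod_le_prod
          · intro q hq
            rw [mem_pr] at hq
            exact factor_nonneg hOK hq.1 hq.2.1 (le_of_lt hq.2.2)
          · intro q hq
            have hq' := mem_pr.mp hq
            have hy1 := hOK.1 q.1 hq'.1
            have hy2 := hOK.1 q.2 hq'.2.1
            by_cases h10 : 0 < y q.1 <;> by_cases h20 : 0 < y q.2
            · rw [ysc_pos h10, ysc_pos h20,
                mul_div_mul_left _ _ (by positivity : lamP ≠ 0)]
            · have h2n : y q.2 < 0 := lt_of_le_of_ne (not_lt.mp h20) hy2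
              rw [ysc_pos h10, ysc_npos h20]
              have hr : y q.1 / y q.2 < 0 := div_neg_of_pos_of_neg h10 h2n
              have : lamP * y q.1 / y q.2 = lamP * (y q.1 / y q.2) := by ring
              rw [this]
              nlinarith
            · exfalso
              apply hU
              have h1n : y q.1 < 0 := lt_of_le_of_ne (not_lt.mp h10) hy1
              exact ⟨q, by rw [Finset.mem_filter]; exact ⟨hq, h1n, h20⟩⟩
            · rw [ysc_npos h10, ysc_npos h20]
        exact le_trans hmono hPP
    · -- D empty: there must be a pair (-,+) : scale down, monotone
      have hU : ((pr S).filter (fun q => y q.1 < 0 ∧ 0 < y q.2)).Nonempty := by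
        rcases lt_trichotomy jn ip with h | h | h
        · exact ⟨⟨jn, ip⟩, by rw [Finset.mem_filter, mem_pr]; exact ⟨⟨hjn, hip, h⟩, hyn, hyp⟩⟩
        · exfalso; subst h; linarith
        · exfalso
          apply hD
          exact ⟨⟨ip, jn⟩, by rw [Finset.mem_filter, mem_pr]; exact ⟨⟨hip, hjn, h⟩, hyp, hyn⟩⟩
      obtain ⟨lamM, hlamM1, hlamM0, hOKM, hPM⟩ :
          ∃ lam : ℝ, lam ≤ 1 ∧ 0 < lam ∧ OK (ysc y lam) S ∧
            PP (ysc y lam) S ≤ 2 ^ (S.card / 2) := by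
        set Up := (pr S).filter (fun q => y q.1 < 0 ∧ 0 < y q.2) with hUp
        set lam := Up.sup' hU (fun q => -y q.1 / y q.2) with hlam
        have hmem : ∀ q ∈ Up, q.1 ∈ S ∧ q.2 ∈ S ∧ q.1 < q.2 ∧ y q.1 < 0 ∧ 0 < y q.2 := by
          intro q hq
          rw [hUp, Finset.mem_filter, mem_pr] at hq
          exact ⟨hq.1.1, hq.1.2.1, hq.1.2.2, hq.2⟩
        have hone : lam ≤ 1 := by
          rw [hlam]
          apply Finset.sup'_le
          intro q hq
          obtain ⟨h1, h2, h3, h4, h5⟩ := hmem q hq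
          rw [div_le_one h5]
          have := habs2 h1 h2 h3
          rw [abs_of_neg h4, abs_of_pos h5] at this
          exact this
        have hl0 : (0:ℝ) < lam := by
          obtain ⟨q, hq⟩ := hU
          obtain ⟨h1, h2, h3, h4, h5⟩ := hmem q hq
          have hpos : 0 < -y q.1 / y q.2 := div_pos (by linarith) h5
          calc (0:ℝ) < -y q.1 / y q.2 := hpos
            _ ≤ lam := by rw [hlam]; exact Finset.le_sup' (fun q => -y q.1 / y q.2) hq
        have hUbd : ∀ q ∈ Up, -y q.1 ≤ lam * y q.2 := by
          intro q hq
          obtain ⟨h1, h2, h3, h4, h5⟩ := hmem q hq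
          have hle : -y q.1 / y q.2 ≤ lam := by
            rw [hlam]; exact Finset.le_sup' (fun q => -y q.1 / y q.2) hq
          calc -y q.1 = (-y q.1 / y q.2) * y q.2 :=
                (div_mul_cancel₀ _ (ne_of_gt h5)).symm
            _ ≤ lam * y q.2 := mul_le_mul_of_nonneg_right hle (le_of_lt h5)
        have hDbd : ∀ q ∈ (pr S).filter (fun q => 0 < y q.1 ∧ y q.2 < 0),
            lam * y q.1 ≤ -y q.2 := by
          intro q hq
          rw [Finset.mem_filter, mem_pr] at hq
          have := habs2 hq.1.1 hq.1.2.1 hq.1.2.2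
          rw [abs_of_pos hq.2.1, abs_of_neg hq.2.2] at this
          calc lam * y q.1 ≤ y q.1 :=
                mul_le_of_le_one_left (le_of_lt hq.2.1) hone
            _ ≤ -y q.2 := this
        have hOK' := scaledOK hOK hl0 hUbd hDbd
        refine ⟨lam, hone, hl0, hOK', ?_⟩
        obtain ⟨q0, hq0, hq0e⟩ := Finset.exists_mem_eq_sup' hU (fun q => -y q.1 / y q.2)
        obtain ⟨h1, h2, h3, h4, h5⟩ := hmem q0 hq0
        apply mergeBound ih hc hOK'
        refine ⟨q0.1, h1, q0.2, h2, h3, ?_⟩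
        rw [ysc_pos h5, ysc_npos (not_lt.mpr (le_of_lt h4))]
        rw [hlam.trans hq0e, div_mul_cancel₀ _ (ne_of_gt h5)]
      have hmono : PP y S ≤ PP (ysc y lamM) S := by
        unfold PP
        apply Finset.prod_le_prod
        · intro q hq
          rw [mem_pr] at hq
          exact factor_nonneg hOK hq.1 hq.2.1 (le_of_lt hq.2.2)
        · intro q hq
          have hq' := mem_pr.mp hq
          have hy1 := hOK.1 q.1 hq'.1
          have hy2 := hOK.1 q.2 hq'.2.1
          by_cases h10 : 0 < y q.1 <;> by_cases h20 : 0 < y q.2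
          · rw [ysc_pos h10, ysc_pos h20,
              mul_div_mul_left _ _ (by positivity : lamM ≠ 0)]
          · exfalso
            apply hD
            have h2n : y q.2 < 0 := lt_of_le_of_ne (not_lt.mp h20) hy2
            exact ⟨q, by rw [Finset.mem_filter]; exact ⟨hq, h10, h2n⟩⟩
          · have h1n : y q.1 < 0 := lt_of_le_of_ne (not_lt.mp h10) hy1
            rw [ysc_npos h10, ysc_pos h20]
            have hkey : y q.1 / (lamM * y q.2) ≤ y q.1 / y q.2 := by
              rw [div_le_div_iff₀ (mul_pos hlamM0 h20) h20]
              nlinarith [mul_nonneg (mul_nonneg (le_of_lt (neg_pos.mpr h1n))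
                (le_of_lt h20)) (sub_nonneg.mpr hlamM1)]
            linarith
          · rw [ysc_npos h10, ysc_npos h20]
      exact le_trans hmono hPM

end PohstAux

theorem pohst_bound (n : ℕ) (hn : 2 ≤ n) (y : ℕ → ℝ)
    (hy : ∀ i ∈ Finset.Icc 1 n, y i ≠ 0)
    (hmono : ∀ i, 1 ≤ i → i ≤ n - 1 → |y i| < |y (i + 1)|) :
    ∏ q ∈ (Finset.Icc 1 n ×ˢ Finset.Icc 1 n).filter (fun q => q.1 < q.2),
        (1 - y q.1 / y q.2) ≤ 2 ^ (n / 2) := by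
  have step : ∀ i, 1 ≤ i → ∀ j, i ≤ j → j ≤ n → |y i| ≤ |y j| := by
    intro i hi1 j
    induction j with
    | zero => intro hij _; exfalso; omega
    | succ j ih =>
      intro hij hjn
      rcases Nat.lt_or_ge i (j + 1) with h | h
      · have h1 : |y i| ≤ |y j| := ih (by omega) (by omega)
        have h2 : |y j| < |y (j + 1)| := hmono j (by omega) (by omega)
        linarith
      · have hieq : i = j + 1 := by omega
        rw [hieq]
  have hmon : ∀ i ∈ Finset.Icc 1 n, ∀ j ∈ Finset.Icc 1 n, i ≤ j → |y i| ≤ |y j| := by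
    intro i hi j hj hij
    rw [Finset.mem_Icc] at hi hj
    exact step i hi.1 j hij hj.2
  have hcard : (Finset.Icc 1 n).card = n := by
    rw [Nat.card_Icc]; omega
  have hmain := PohstAux.main n (Finset.Icc 1 n) y (by rw [hcard]) ⟨hy, hmon⟩
  rw [hcard] at hmain
  exact hmain
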